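/- Let P, v, Q be three points in ℝ² forming a triangle whose interior angles are all less than 120°. Then there exists a unique point F in the interior of triangle PvQ such that the three angles ∠PFQ, ∠QFv, ∠vFP are all equal to 120°. -/

import Mathlib

open Real EuclideanGeometry

namespace FermatAux

open RealInnerProductSpace

variable {V : Type*} [NormedAddCommGroup V] [InnerProductSpace ℝ V]

/-- unit vector from `F` toward `p`. -/
noncomputable def u (F p : V) : V := ‖p - F‖⁻¹ • (p - F)

lemma norm_u {F p : V} (h : p ≠ F) : ‖u F p‖ = 1 := by
  have h0 : p - F ≠ 0 := sub_ne_zero.mpr h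
  rw [u, norm_smul, norm_inv, norm_norm, inv_mul_cancel₀ (norm_ne_zero_iff.mpr h0)]

lemma inner_u_self {F p : V} (h : p ≠ F) : ⟪u F p, p - F⟫ = ‖p - F‖ := by
  have h0 : p - F ≠ 0 := sub_ne_zero.mpr h
  have hn : ‖p - F‖ ≠ 0 := norm_ne_zero_iff.mpr h0
  rw [u, real_inner_smul_left, real_inner_self_eq_norm_sq]
  field_simp

lemma inner_u (F p d : V) : ⟪u F p, d⟫ = ‖p - F‖⁻¹ * ⟪p - F, d⟫ := by
  rw [u, real_inner_smul_left]

lemma dist_lower (F p X : V) (h : p ≠ F) :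
    ‖p - F‖ + ⟪u F p, F - X⟫ ≤ ‖p - X‖ := by
  have h1 : ⟪u F p, p - X⟫ ≤ ‖p - X‖ := by
    calc ⟪u F p, p - X⟫ ≤ ‖u F p‖ * ‖p - X‖ := real_inner_le_norm _ _
    _ = ‖p - X‖ := by rw [norm_u h, one_mul]
  have h2 : ⟪u F p, p - X⟫ = ⟪u F p, p - F⟫ + ⟪u F p, F - X⟫ := by
    rw [← inner_add_right]
    congr 1
    abel
  rw [inner_u_self h] at h2
  linarith

lemma key_upper (x d : V) (hx : x ≠ 0) {t : ℝ} (ht : 0 ≤ t) (htd : t * ‖d‖ ≤ ‖x‖) :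
    ‖x + t • d‖ ≤ ‖x‖ + t * (⟪x, d⟫ / ‖x‖) + t ^ 2 * ‖d‖ ^ 2 / ‖x‖ := by
  have ha : (0:ℝ) < ‖x‖ := norm_pos_iff.mpr hx
  have ha' : ‖x‖ ≠ 0 := ne_of_gt ha
  have hcs : -(‖x‖ * ‖d‖) ≤ ⟪x, d⟫ := by
    have := abs_real_inner_le_norm x d
    rw [abs_le] at this
    linarith [this.1]
  have h1 : -(t * ‖d‖) ≤ t * (⟪x, d⟫ / ‖x‖) := by
    have hdiv : -‖d‖ ≤ ⟪x, d⟫ / ‖x‖ := by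
      rw [le_div_iff₀ ha]
      nlinarith
    have := mul_le_mul_of_nonneg_left hdiv ht
    nlinarith
  have hR : 0 ≤ ‖x‖ + t * (⟪x, d⟫ / ‖x‖) + t ^ 2 * ‖d‖ ^ 2 / ‖x‖ := by
    have h2 : (0:ℝ) ≤ t ^ 2 * ‖d‖ ^ 2 / ‖x‖ := by positivity
    linarith
  have hsq : ‖x + t • d‖ ^ 2 = ‖x‖ ^ 2 + 2 * t * ⟪x, d⟫ + t ^ 2 * ‖d‖ ^ 2 := by
    rw [norm_add_sq_real, real_inner_smul_right, norm_smul, Real.norm_eq_abs, abs_of_nonneg ht]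
    ring
  have hR2 : (‖x‖ + t * (⟪x, d⟫ / ‖x‖) + t ^ 2 * ‖d‖ ^ 2 / ‖x‖) ^ 2
      = ‖x‖ ^ 2 + 2 * t * ⟪x, d⟫ + 2 * (t ^ 2 * ‖d‖ ^ 2)
        + (t * (⟪x, d⟫ / ‖x‖) + t ^ 2 * ‖d‖ ^ 2 / ‖x‖) ^ 2 := by
    field_simp
    ring
  have h2 : ‖x + t • d‖ ^ 2 ≤ (‖x‖ + t * (⟪x, d⟫ / ‖x‖) + t ^ 2 * ‖d‖ ^ 2 / ‖x‖) ^ 2 := by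
    rw [hsq, hR2]
    have : (0:ℝ) ≤ t ^ 2 * ‖d‖ ^ 2 := by positivity
    nlinarith [sq_nonneg (t * (⟪x, d⟫ / ‖x‖) + t ^ 2 * ‖d‖ ^ 2 / ‖x‖)]
  calc ‖x + t • d‖ = Real.sqrt (‖x + t • d‖ ^ 2) := (Real.sqrt_sq (norm_nonneg _)).symm
  _ ≤ Real.sqrt ((‖x‖ + t * (⟪x, d⟫ / ‖x‖) + t ^ 2 * ‖d‖ ^ 2 / ‖x‖) ^ 2) := Real.sqrt_le_sqrt h2
  _ = _ := Real.sqrt_sq hR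


lemma dist_pt_upper (F p d : V) (h : p ≠ F) {t : ℝ} (ht : 0 ≤ t)
    (htd : t * ‖d‖ ≤ ‖p - F‖) :
    ‖p - (F + t • d)‖ ≤ ‖p - F‖ - t * ⟪u F p, d⟫ + t ^ 2 * ‖d‖ ^ 2 / ‖p - F‖ := by
  have hx : p - F ≠ 0 := sub_ne_zero.mpr h
  have := key_upper (p - F) (-d) hx ht (by simpa using htd)
  have heq : p - (F + t • d) = (p - F) + t • (-d) := by
    rw [smul_neg]; abel
  rw [heq]
  have hinner : ⟪p - F, -d⟫ / ‖p - F‖ = -(⟪u F p, d⟫) := by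
    rw [inner_neg_right, inner_u, div_eq_inv_mul]
    ring
  rw [hinner] at this
  simpa [sub_eq_add_neg, mul_neg] using this

lemma pert {c C δ : ℝ} (hc : c < 0) (hC : 0 ≤ C) (hδ : 0 < δ)
    (h : ∀ t : ℝ, 0 < t → t ≤ δ → 0 ≤ t * c + t ^ 2 * C) : False := by
  have hC1 : (0:ℝ) < 2 * (C + 1) := by linarith
  set t := min δ ((-c) / (2 * (C + 1))) with htdef
  have ht1 : 0 < t := lt_min hδ (div_pos (by linarith) hC1)
  have ht3 : t ≤ (-c) / (2 * (C + 1)) := min_le_right _ _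
  have hkey := h t ht1 (min_le_left _ _)
  have ht4 : t * (2 * (C + 1)) ≤ -c := (le_div_iff₀ hC1).mp ht3
  nlinarith [mul_pos ht1 ht1, mul_le_mul_of_nonneg_left ht4 (le_of_lt ht1)]

lemma inner_u_u (F p q : V) :
    ⟪u F p, u F q⟫ = ⟪p - F, q - F⟫ / (‖p - F‖ * ‖q - F‖) := by
  rw [u, u, real_inner_smul_left, real_inner_smul_right, div_eq_inv_mul, mul_inv]
  ring

lemma cos_angle_eq (F p q : V) :
    Real.cos (InnerProductGeometry.angle (p - F) (q - F)) = ⟪u F p, u F q⟫ := by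
  rw [InnerProductGeometry.cos_angle, inner_u_u]

lemma cos_two_pi_div_three : Real.cos (2 * π / 3) = -(1/2) := by
  rw [show (2:ℝ) * π / 3 = π - π/3 by ring, Real.cos_pi_sub, Real.cos_pi_div_three]

lemma arccos_neg_half : Real.arccos (-(1/2)) = 2 * π / 3 := by
  have h12 : Real.arccos (1/2) = π / 3 := by
    rw [show (1/2 : ℝ) = Real.cos (π/3) from by rw [Real.cos_pi_div_three],
      Real.arccos_cos (by positivity) (by linarith [Real.pi_pos])]
  rw [Real.arccos_neg, h12]
  ring

lemma angle_eq_of_inner {F p q : V} (h : ⟪u F p, u F q⟫ = -(1/2)) :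
    InnerProductGeometry.angle (p - F) (q - F) = 2 * π / 3 := by
  rw [InnerProductGeometry.angle, ← inner_u_u, h, arccos_neg_half]

lemma inner_of_angle_eq {F p q : V}
    (h : InnerProductGeometry.angle (p - F) (q - F) = 2 * π / 3) :
    ⟪u F p, u F q⟫ = -(1/2) := by
  rw [← cos_angle_eq, h, cos_two_pi_div_three]

lemma ne_of_angle {F p q : V} (h : InnerProductGeometry.angle (p - F) (q - F) = 2 * π / 3) :
    p ≠ F ∧ q ≠ F := by
  constructor
  · rintro rfl
    rw [sub_self, InnerProductGeometry.angle_zero_left] at h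
    nlinarith [Real.pi_pos]
  · rintro rfl
    rw [sub_self, InnerProductGeometry.angle_zero_right] at h
    nlinarith [Real.pi_pos]

lemma sum_u_eq_zero {F P v Q : V} (hP : P ≠ F) (hv : v ≠ F) (hQ : Q ≠ F)
    (h1 : ⟪u F P, u F Q⟫ = -(1/2)) (h2 : ⟪u F Q, u F v⟫ = -(1/2))
    (h3 : ⟪u F v, u F P⟫ = -(1/2)) :
    u F P + u F v + u F Q = 0 := by
  have sP : ⟪u F P, u F P⟫ = 1 := by
    rw [real_inner_self_eq_norm_sq, norm_u hP]; norm_num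
  have sv : ⟪u F v, u F v⟫ = 1 := by
    rw [real_inner_self_eq_norm_sq, norm_u hv]; norm_num
  have sQ : ⟪u F Q, u F Q⟫ = 1 := by
    rw [real_inner_self_eq_norm_sq, norm_u hQ]; norm_num
  have h1' : ⟪u F Q, u F P⟫ = -(1/2) := by rw [real_inner_comm]; exact h1
  have h2' : ⟪u F v, u F Q⟫ = -(1/2) := by rw [real_inner_comm]; exact h2
  have h3' : ⟪u F P, u F v⟫ = -(1/2) := by rw [real_inner_comm]; exact h3
  have hn : ⟪u F P + u F v + u F Q, u F P + u F v + u F Q⟫ = 0 := by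
    simp only [inner_add_left, inner_add_right, sP, sv, sQ, h1, h2, h3, h1', h2', h3']
    norm_num
  exact inner_self_eq_zero.mp hn

lemma global_min_of_sum (P v Q G : V) (h1 : P ≠ G) (h2 : v ≠ G) (h3 : Q ≠ G)
    (hS : u G P + u G v + u G Q = 0) (X : V) :
    ‖P - G‖ + ‖v - G‖ + ‖Q - G‖ ≤ ‖P - X‖ + ‖v - X‖ + ‖Q - X‖ := by
  have l1 := dist_lower G P X h1
  have l2 := dist_lower G v X h2
  have l3 := dist_lower G Q X h3
  have hz : ⟪u G P, G - X⟫ + ⟪u G v, G - X⟫ + ⟪u G Q, G - X⟫ = 0 := by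
    rw [← inner_add_left, ← inner_add_left, hS, inner_zero_left]
  linarith


lemma not_min_of_angle_lt (p q r : V) (hq : q ≠ p) (hr : r ≠ p)
    (hangle : InnerProductGeometry.angle (q - p) (r - p) < 2 * π / 3)
    (hmin : ∀ X, ‖q - p‖ + ‖r - p‖ ≤ ‖p - X‖ + ‖q - X‖ + ‖r - X‖) : False := by
  set w := u p q + u p r with hw
  have hcos : -(1/2) < ⟪u p q, u p r⟫ := by
    rw [← cos_angle_eq]
    calc -(1/2) = Real.cos (2*π/3) := cos_two_pi_div_three.symm
    _ < Real.cos (InnerProductGeometry.angle (q - p) (r - p)) :=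
      Real.cos_lt_cos_of_nonneg_of_le_pi (InnerProductGeometry.angle_nonneg _ _)
        (by linarith [Real.pi_pos]) hangle
  have hw2 : ‖w‖ ^ 2 = 2 + 2 * ⟪u p q, u p r⟫ := by
    rw [hw, norm_add_sq_real, norm_u hq, norm_u hr]; ring
  have hw1 : 1 < ‖w‖ := by nlinarith [norm_nonneg w]
  have hqp : (0:ℝ) < ‖q - p‖ := by rw [norm_pos_iff]; exact sub_ne_zero.mpr hq
  have hrp : (0:ℝ) < ‖r - p‖ := by rw [norm_pos_iff]; exact sub_ne_zero.mpr hr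
  have hδ : 0 < min ‖q - p‖ ‖r - p‖ / (‖w‖ + 1) := by
    apply div_pos (lt_min hqp hrp); linarith
  refine pert (c := ‖w‖ - ‖w‖ ^ 2)
    (C := ‖w‖ ^ 2 / ‖q - p‖ + ‖w‖ ^ 2 / ‖r - p‖) (by nlinarith) (by positivity) hδ ?_
  intro t ht1 ht2
  have h0 : (0:ℝ) < ‖w‖ + 1 := by linarith
  have hb : t * ‖w‖ ≤ min ‖q - p‖ ‖r - p‖ := by
    have h5 := (le_div_iff₀ h0).mp ht2
    nlinarith
  have hb1 : t * ‖w‖ ≤ ‖q - p‖ := le_trans hb (min_le_left _ _)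
  have hb2 : t * ‖w‖ ≤ ‖r - p‖ := le_trans hb (min_le_right _ _)
  have h1 := dist_pt_upper p q w hq ht1.le hb1
  have h2 := dist_pt_upper p r w hr ht1.le hb2
  have h3 : ‖p - (p + t • w)‖ = t * ‖w‖ := by
    have : p - (p + t • w) = -(t • w) := by abel
    rw [this, norm_neg, norm_smul, Real.norm_eq_abs, abs_of_nonneg ht1.le]
  have h4 := hmin (p + t • w)
  rw [h3] at h4
  have h5 : ⟪u p q, w⟫ + ⟪u p r, w⟫ = ‖w‖ ^ 2 := by
    rw [hw, ← inner_add_left, real_inner_self_eq_norm_sq]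
  have h6 : t * ⟪u p q, w⟫ + t * ⟪u p r, w⟫ = t * ‖w‖ ^ 2 := by
    rw [← mul_add, h5]
  have heq : t * (‖w‖ - ‖w‖ ^ 2) + t ^ 2 * (‖w‖ ^ 2 / ‖q - p‖ + ‖w‖ ^ 2 / ‖r - p‖)
      = t * ‖w‖ - (t * ⟪u p q, w⟫ + t * ⟪u p r, w⟫)
        + (t ^ 2 * ‖w‖ ^ 2 / ‖q - p‖ + t ^ 2 * ‖w‖ ^ 2 / ‖r - p‖) := by
    rw [h6]; ring
  rw [heq]
  linarith

lemma u_def (F p : V) : u F p = ‖p - F‖⁻¹ • (p - F) := rfl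

end FermatAux

set_option maxHeartbeats 2000000 in
open FermatAux RealInnerProductSpace in
/-- A triangle `P v Q` in ℝ² all of whose interior angles are less than 120° has
a unique Fermat (Torricelli) point: a point `F` in the interior of the triangle
at which all three sides subtend an angle of 120°. -/
theorem fermat_point_of_triangle (P v Q : EuclideanSpace ℝ (Fin 2))
    (hind : AffineIndependent ℝ ![P, v, Q])
    (hP : ∠ v P Q < 2 * π / 3)
    (hv : ∠ P v Q < 2 * π / 3)
    (hQ : ∠ P Q v < 2 * π / 3) :
    ∃! F : EuclideanSpace ℝ (Fin 2),
      F ∈ interior (convexHull ℝ ({P, v, Q} : Set (EuclideanSpace ℝ (Fin 2)))) ∧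
      ∠ P F Q = 2 * π / 3 ∧ ∠ Q F v = 2 * π / 3 ∧ ∠ v F P = 2 * π / 3 := by
  classical
  simp only [EuclideanGeometry.angle, vsub_eq_sub] at hP hv hQ
  have hinj := hind.injective
  have hPv : P ≠ v := by
    intro h; exact (by decide : (0:Fin 3) ≠ 1) (hinj (by simp [h]))
  have hPQ : P ≠ Q := by
    intro h; exact (by decide : (0:Fin 3) ≠ 2) (hinj (by simp [h]))
  have hvQ : v ≠ Q := by
    intro h; exact (by decide : (1:Fin 3) ≠ 2) (hinj (by simp [h]))
  set f : EuclideanSpace ℝ (Fin 2) → ℝ := fun X => ‖P - X‖ + ‖v - X‖ + ‖Q - X‖ with hfdef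
  have hfc : Continuous f := by fun_prop
  have hball : (Metric.closedBall P (f P)).Nonempty :=
    ⟨P, Metric.mem_closedBall_self (by simp only [hfdef]; positivity)⟩
  obtain ⟨F, hFK, hFmin⟩ :=
    (isCompact_closedBall P (f P)).exists_isMinOn hball hfc.continuousOn
  have hglob : ∀ X, f F ≤ f X := by
    intro X
    by_cases hX : X ∈ Metric.closedBall P (f P)
    · exact hFmin hX
    · have hd : f P < dist X P := lt_of_not_ge (by simpa [Metric.mem_closedBall] using hX)
      have h1 : dist X P ≤ f X := by
        have hdx : dist X P = ‖P - X‖ := by rw [dist_eq_norm, norm_sub_rev]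
        simp only [hfdef]
        rw [hdx]
        linarith [norm_nonneg (v - X), norm_nonneg (Q - X)]
      have h2 : f F ≤ f P :=
        hFmin (Metric.mem_closedBall_self (by simp only [hfdef]; positivity))
      linarith
  -- F is not a vertex
  have hFP : P ≠ F := by
    intro h
    refine not_min_of_angle_lt P v Q hPv.symm hPQ.symm hP ?_
    intro X
    have h2 := hglob X
    simp only [hfdef] at h2
    rw [← h] at h2
    simp only [sub_self, norm_zero, zero_add] at h2
    linarith [norm_nonneg (P - X)]
  have hFv : v ≠ F := by
    intro h
    refine not_min_of_angle_lt v P Q hPv hvQ.symm hv ?_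
    intro X
    have h2 := hglob X
    simp only [hfdef] at h2
    rw [← h] at h2
    simp only [sub_self, norm_zero] at h2
    linarith [norm_nonneg (v - X)]
  have hFQ : Q ≠ F := by
    intro h
    refine not_min_of_angle_lt Q P v hPQ hvQ hQ ?_
    intro X
    have h2 := hglob X
    simp only [hfdef] at h2
    rw [← h] at h2
    simp only [sub_self, norm_zero] at h2
    linarith [norm_nonneg (Q - X)]
  have haP : (0:ℝ) < ‖P - F‖ := norm_pos_iff.mpr (sub_ne_zero.mpr hFP)
  have hav : (0:ℝ) < ‖v - F‖ := norm_pos_iff.mpr (sub_ne_zero.mpr hFv)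
  have haQ : (0:ℝ) < ‖Q - F‖ := norm_pos_iff.mpr (sub_ne_zero.mpr hFQ)
  -- the sum of the three unit vectors at the minimizer vanishes
  have habc : u F P + u F v + u F Q = 0 := by
    by_contra hS0
    set S := u F P + u F v + u F Q with hSdef
    have hnS : 0 < ‖S‖ := norm_pos_iff.mpr hS0
    have hδ : 0 < min (min ‖P - F‖ ‖v - F‖) ‖Q - F‖ / (‖S‖ + 1) := by
      apply div_pos (lt_min (lt_min haP hav) haQ); linarith
    refine pert (c := -‖S‖^2)
      (C := ‖S‖^2/‖P - F‖ + ‖S‖^2/‖v - F‖ + ‖S‖^2/‖Q - F‖)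
      (by nlinarith) (by positivity) hδ ?_
    intro t ht1 ht2
    have h0 : (0:ℝ) < ‖S‖ + 1 := by linarith
    have hb := (le_div_iff₀ h0).mp ht2
    have hb' : t * ‖S‖ ≤ min (min ‖P - F‖ ‖v - F‖) ‖Q - F‖ := by nlinarith
    have hb1 : t * ‖S‖ ≤ ‖P - F‖ :=
      le_trans hb' (le_trans (min_le_left _ _) (min_le_left _ _))
    have hb2 : t * ‖S‖ ≤ ‖v - F‖ :=
      le_trans hb' (le_trans (min_le_left _ _) (min_le_right _ _))
    have hb3 : t * ‖S‖ ≤ ‖Q - F‖ := le_trans hb' (min_le_right _ _)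
    have h1 := dist_pt_upper F P S hFP ht1.le hb1
    have h2 := dist_pt_upper F v S hFv ht1.le hb2
    have h3 := dist_pt_upper F Q S hFQ ht1.le hb3
    have h4 := hglob (F + t • S)
    simp only [hfdef] at h4
    have h5 : ⟪u F P, S⟫ + ⟪u F v, S⟫ + ⟪u F Q, S⟫ = ‖S‖^2 := by
      rw [← inner_add_left, ← inner_add_left, ← hSdef, real_inner_self_eq_norm_sq]
    have h6 : t * ⟪u F P, S⟫ + t * ⟪u F v, S⟫ + t * ⟪u F Q, S⟫ = t * ‖S‖^2 := by
      rw [← mul_add, ← mul_add, h5]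
    have heq : t * -‖S‖^2 + t^2 * (‖S‖^2/‖P - F‖ + ‖S‖^2/‖v - F‖ + ‖S‖^2/‖Q - F‖)
        = -(t * ⟪u F P, S⟫ + t * ⟪u F v, S⟫ + t * ⟪u F Q, S⟫)
          + (t^2*‖S‖^2/‖P - F‖ + t^2*‖S‖^2/‖v - F‖ + t^2*‖S‖^2/‖Q - F‖) := by
      rw [h6]; ring
    rw [heq]
    linarith
  have nP : ‖u F P‖ = 1 := norm_u hFP
  have nv : ‖u F v‖ = 1 := norm_u hFv
  have nQ : ‖u F Q‖ = 1 := norm_u hFQ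
  have iPQ : ⟪u F P, u F Q⟫ = -(1/2) := by
    have h1 : u F P + u F Q = -(u F v) := by
      have h2 : u F P + u F Q = u F P + u F v + u F Q - u F v := by abel
      rw [h2, habc]; abel
    have h2 : ‖u F P + u F Q‖^2 = 1 := by rw [h1, norm_neg, nv]; norm_num
    have h3 := norm_add_sq_real (u F P) (u F Q)
    rw [nP, nQ] at h3
    nlinarith
  have iQv : ⟪u F Q, u F v⟫ = -(1/2) := by
    have h1 : u F Q + u F v = -(u F P) := by
      have h2 : u F Q + u F v = u F P + u F v + u F Q - u F P := by abel
      rw [h2, habc]; abel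
    have h2 : ‖u F Q + u F v‖^2 = 1 := by rw [h1, norm_neg, nP]; norm_num
    have h3 := norm_add_sq_real (u F Q) (u F v)
    rw [nQ, nv] at h3
    nlinarith
  have ivP : ⟪u F v, u F P⟫ = -(1/2) := by
    have h1 : u F v + u F P = -(u F Q) := by
      have h2 : u F v + u F P = u F P + u F v + u F Q - u F Q := by abel
      rw [h2, habc]; abel
    have h2 : ‖u F v + u F P‖^2 = 1 := by rw [h1, norm_neg, nQ]; norm_num
    have h3 := norm_add_sq_real (u F v) (u F P)
    rw [nv, nP] at h3
    nlinarith
  have aPQ : ∠ P F Q = 2 * π / 3 := by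
    simp only [EuclideanGeometry.angle, vsub_eq_sub]
    exact angle_eq_of_inner iPQ
  have aQv : ∠ Q F v = 2 * π / 3 := by
    simp only [EuclideanGeometry.angle, vsub_eq_sub]
    exact angle_eq_of_inner iQv
  have avP : ∠ v F P = 2 * π / 3 := by
    simp only [EuclideanGeometry.angle, vsub_eq_sub]
    exact angle_eq_of_inner ivP
  -- interior membership
  set T : ℝ := ‖P - F‖⁻¹ + ‖v - F‖⁻¹ + ‖Q - F‖⁻¹ with hT
  have hTpos : 0 < T := by rw [hT]; positivity
  set wt : Fin 3 → ℝ := ![‖P - F‖⁻¹/T, ‖v - F‖⁻¹/T, ‖Q - F‖⁻¹/T] with hwt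
  have hsumw : ∑ i, wt i = 1 := by
    rw [Fin.sum_univ_three]
    simp only [hwt, Matrix.cons_val_zero, Matrix.cons_val_one, Matrix.head_cons,
      Matrix.cons_val_two, Matrix.tail_cons]
    rw [← add_div, ← add_div, ← hT, div_self hTpos.ne']
  have hST : ‖P - F‖⁻¹ • (P - F) + ‖v - F‖⁻¹ • (v - F) + ‖Q - F‖⁻¹ • (Q - F) = 0 := by
    have := habc
    simp only [u_def] at this
    exact this
  have hcomb0 : (‖P - F‖⁻¹/T) • P + (‖v - F‖⁻¹/T) • v + (‖Q - F‖⁻¹/T) • Q = F := by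
    have h1 : ‖P - F‖⁻¹ • P + ‖v - F‖⁻¹ • v + ‖Q - F‖⁻¹ • Q = T • F := by
      have h2 := hST
      rw [smul_sub, smul_sub, smul_sub] at h2
      have h3 : (‖P - F‖⁻¹ • P + ‖v - F‖⁻¹ • v + ‖Q - F‖⁻¹ • Q)
          - (‖P - F‖⁻¹ • F + ‖v - F‖⁻¹ • F + ‖Q - F‖⁻¹ • F) = 0 := by
        calc (‖P - F‖⁻¹ • P + ‖v - F‖⁻¹ • v + ‖Q - F‖⁻¹ • Q)
            - (‖P - F‖⁻¹ • F + ‖v - F‖⁻¹ • F + ‖Q - F‖⁻¹ • F)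
            = ‖P - F‖⁻¹ • P - ‖P - F‖⁻¹ • F + (‖v - F‖⁻¹ • v - ‖v - F‖⁻¹ • F)
              + (‖Q - F‖⁻¹ • Q - ‖Q - F‖⁻¹ • F) := by abel
        _ = 0 := h2
      have h4 : T • F = ‖P - F‖⁻¹ • F + ‖v - F‖⁻¹ • F + ‖Q - F‖⁻¹ • F := by
        rw [hT, add_smul, add_smul]
      rw [h4]
      exact sub_eq_zero.mp h3
    have h5 := congrArg (fun z : EuclideanSpace ℝ (Fin 2) => T⁻¹ • z) h1
    simp only [smul_add, smul_smul] at h5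
    rw [inv_mul_cancel₀ hTpos.ne', one_smul] at h5
    calc (‖P - F‖⁻¹/T) • P + (‖v - F‖⁻¹/T) • v + (‖Q - F‖⁻¹/T) • Q
        = (T⁻¹ * ‖P - F‖⁻¹) • P + (T⁻¹ * ‖v - F‖⁻¹) • v + (T⁻¹ * ‖Q - F‖⁻¹) • Q := by
          rw [div_eq_inv_mul, div_eq_inv_mul, div_eq_inv_mul]
    _ = F := h5
  have hcombA : Finset.univ.affineCombination ℝ ![P, v, Q] wt = F := by
    rw [Finset.univ.affineCombination_eq_linear_combination _ _ hsumw, Fin.sum_univ_three]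
    simp only [hwt, Matrix.cons_val_zero, Matrix.cons_val_one, Matrix.head_cons,
      Matrix.cons_val_two, Matrix.tail_cons]
    exact hcomb0
  have htop : affineSpan ℝ (Set.range ![P, v, Q]) = ⊤ := by
    rw [hind.affineSpan_eq_top_iff_card_eq_finrank_add_one]
    simp [finrank_euclideanSpace_fin]
  set bb : AffineBasis (Fin 3) ℝ (EuclideanSpace ℝ (Fin 2)) := ⟨![P, v, Q], hind, htop⟩
    with hbbdef
  have hbb : ⇑bb = ![P, v, Q] := rfl
  have hrange : Set.range ![P, v, Q] = ({P, v, Q} : Set (EuclideanSpace ℝ (Fin 2))) := by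
    ext x
    constructor
    · rintro ⟨i, rfl⟩
      fin_cases i <;> simp
    · intro hx
      rcases hx with rfl | rfl | rfl
      · exact ⟨0, rfl⟩
      · exact ⟨1, rfl⟩
      · exact ⟨2, rfl⟩
  have hmemF : F ∈ interior (convexHull ℝ ({P, v, Q} : Set (EuclideanSpace ℝ (Fin 2)))) := by
    rw [← hrange, ← hbb, bb.interior_convexHull]
    intro i
    have hcF : bb.coord i F = wt i := by
      rw [← hcombA]
      exact bb.coord_apply_combination_of_mem (Finset.mem_univ i) hsumw
    rw [hcF]
    fin_cases i
    · show (0:ℝ) < ‖P - F‖⁻¹ / T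
      positivity
    · show (0:ℝ) < ‖v - F‖⁻¹ / T
      positivity
    · show (0:ℝ) < ‖Q - F‖⁻¹ / T
      positivity
  -- uniqueness
  refine ⟨F, ⟨hmemF, aPQ, aQv, avP⟩, ?_⟩
  rintro G ⟨hGmem, g1, g2, g3⟩
  clear hGmem
  simp only [EuclideanGeometry.angle, vsub_eq_sub] at g1 g2 g3
  obtain ⟨hGP, hGQ⟩ := ne_of_angle g1
  obtain ⟨-, hGv⟩ := ne_of_angle g2
  have j1 := inner_of_angle_eq g1
  have j2 := inner_of_angle_eq g2
  have j3 := inner_of_angle_eq g3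
  have hSG := sum_u_eq_zero hGP hGv hGQ j1 j2 j3
  have hGmin := global_min_of_sum P v Q G hGP hGv hGQ hSG
  have hglobG := hglob G
  simp only [hfdef] at hglobG
  have hfeq : ‖P - F‖ + ‖v - F‖ + ‖Q - F‖ = ‖P - G‖ + ‖v - G‖ + ‖Q - G‖ :=
    le_antisymm hglobG (hGmin F)
  by_contra hne
  have hGFne : G - F ≠ 0 := sub_ne_zero.mpr hne
  set m : EuclideanSpace ℝ (Fin 2) := (2:ℝ)⁻¹ • (F + G) with hm
  have hmid : ∀ p : EuclideanSpace ℝ (Fin 2),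
      p - m = (2:ℝ)⁻¹ • ((p - F) + (p - G)) := by
    intro p; rw [hm]; module
  have hub : ∀ p : EuclideanSpace ℝ (Fin 2),
      ‖p - m‖ ≤ 2⁻¹ * (‖p - F‖ + ‖p - G‖) := by
    intro p
    rw [hmid p, norm_smul, Real.norm_eq_abs, abs_of_nonneg (by norm_num : (0:ℝ) ≤ 2⁻¹)]
    exact mul_le_mul_of_nonneg_left (norm_add_le _ _) (by norm_num)
  have hgm := hGmin m
  have hFm := hglob m
  simp only [hfdef] at hFm
  have hrayeq : ∀ p : EuclideanSpace ℝ (Fin 2),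
      ‖p - m‖ = 2⁻¹ * (‖p - F‖ + ‖p - G‖) →
      ‖(p - F) + (p - G)‖ = ‖p - F‖ + ‖p - G‖ := by
    intro p hp
    rw [hmid p, norm_smul, Real.norm_eq_abs, abs_of_nonneg (by norm_num : (0:ℝ) ≤ 2⁻¹)] at hp
    linarith
  have eP : ‖P - m‖ = 2⁻¹ * (‖P - F‖ + ‖P - G‖) :=
    le_antisymm (hub P) (by linarith [hub v, hub Q])
  have ev : ‖v - m‖ = 2⁻¹ * (‖v - F‖ + ‖v - G‖) :=
    le_antisymm (hub v) (by linarith [hub P, hub Q])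
  have eQ : ‖Q - m‖ = 2⁻¹ * (‖Q - F‖ + ‖Q - G‖) :=
    le_antisymm (hub Q) (by linarith [hub P, hub v])
  have key : ∀ p : EuclideanSpace ℝ (Fin 2), p ≠ F → p ≠ G →
      ‖(p - F) + (p - G)‖ = ‖p - F‖ + ‖p - G‖ → ∃ r : ℝ, p = r • (G - F) +ᵥ F := by
    intro p hpF hpG hp
    have hray : SameRay ℝ (p - F) (p - G) := sameRay_iff_norm_add.mpr hp
    obtain ⟨r, hr0, hre⟩ := hray.exists_pos_left (sub_ne_zero.mpr hpF) (sub_ne_zero.mpr hpG)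
    have hk : G - F = (1 - r) • (p - F) := by
      rw [sub_smul, one_smul, hre]; abel
    have h1r : (1 - r) ≠ 0 := by
      intro h; rw [h, zero_smul] at hk; exact hGFne hk
    refine ⟨(1 - r)⁻¹, ?_⟩
    rw [vadd_eq_add, hk, smul_smul, inv_mul_cancel₀ h1r, one_smul, sub_add_cancel]
  have hcol : Collinear ℝ ({P, v, Q} : Set (EuclideanSpace ℝ (Fin 2))) := by
    rw [collinear_iff_exists_forall_eq_smul_vadd]
    refine ⟨F, G - F, ?_⟩
    intro p hp
    rcases hp with h | h | h
    · rw [h]; exact key P hFP hGP (hrayeq P eP)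
    · rw [h]; exact key v hFv hGv (hrayeq v ev)
    · rw [h]; exact key Q hFQ hGQ (hrayeq Q eQ)
  exact (affineIndependent_iff_not_collinear_set.mp hind) hcol
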